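/- Let p be a real polynomial of degree at most n. Then for every x₀ ∈ (−1, 1), |p'(x₀)| ≤ ((n+1)/(1 − |x₀|)) · ‖p‖_{[-1,1]}. -/

import Mathlib

open Polynomial Real

lemma U_eval_one' (m : ℕ) : (Polynomial.Chebyshev.U ℝ (m : ℤ)).eval 1 = m + 1 := by
  induction m using Nat.twoStepInduction with
  | zero => simp [Polynomial.Chebyshev.U_zero]
  | one => simp [Polynomial.Chebyshev.U_one]; norm_num
  | more m ih1 ih2 =>
    have h : ((m + 2 : ℕ) : ℤ) = (m : ℤ) + 2 := by push_cast; ring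
    rw [h, Polynomial.Chebyshev.U_add_two]
    have h1 : ((m + 1 : ℕ) : ℤ) = (m : ℤ) + 1 := by push_cast; ring
    rw [← h1]
    simp only [eval_sub, eval_mul, eval_ofNat, eval_X, ih1, ih2]
    push_cast
    ring

lemma natDegree_T_le' (m : ℕ) : (Polynomial.Chebyshev.T ℝ (m : ℤ)).natDegree ≤ m := by
  induction m using Nat.twoStepInduction with
  | zero => simp [Polynomial.Chebyshev.T_zero]
  | one => simp [Polynomial.Chebyshev.T_one]
  | more m ih1 ih2 =>
    have h : ((m + 2 : ℕ) : ℤ) = (m : ℤ) + 2 := by push_cast; ring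
    rw [h, Polynomial.Chebyshev.T_add_two]
    have h1 : ((m + 1 : ℕ) : ℤ) = (m : ℤ) + 1 := by push_cast; ring
    rw [← h1]
    refine le_trans (natDegree_sub_le _ _) ?_
    simp only [max_le_iff]
    constructor
    · refine le_trans (natDegree_mul_le) ?_
      have h2 : (2 * X : ℝ[X]).natDegree ≤ 1 := by
        refine le_trans (natDegree_mul_le) ?_
        simp
      omega
    · omega

lemma schur_endpoint (d : ℕ) (M : ℝ) (P : Polynomial ℝ) (hd : P.natDegree ≤ d)
    (h : ∀ w ∈ Set.Icc (-1:ℝ) 1, |P.eval w| * Real.sqrt (1 - w^2) ≤ M) :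
    |P.eval 1| ≤ ((d:ℝ)+1) * M := by
  classical
  set N : ℕ := d + 1 with hNdef
  have hNpos : (0:ℝ) < N := by positivity
  have hπ := Real.pi_pos
  set θ : Fin N → ℝ := fun j => (2*((j:ℕ):ℝ)+1) * π / (2*(N:ℝ)) with hθdef
  set v : Fin N → ℝ := fun j => Real.cos (θ j) with hvdef
  have hθmem : ∀ j, θ j ∈ Set.Ioo 0 π := by
    intro j
    constructor
    · apply div_pos (by positivity) (by positivity)
    · rw [div_lt_iff₀ (by positivity)]
      have hj : ((j:ℕ):ℝ) + 1 ≤ N := by exact_mod_cast j.2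
      nlinarith [mul_lt_mul_of_pos_right (show 2*((j:ℕ):ℝ)+1 < 2*(N:ℝ) by linarith) hπ]
  have hsin : ∀ j, 0 < Real.sin (θ j) :=
    fun j => Real.sin_pos_of_pos_of_lt_pi (hθmem j).1 (hθmem j).2
  have hvle : ∀ j, v j ∈ Set.Icc (-1:ℝ) 1 := fun j => ⟨Real.neg_one_le_cos _, Real.cos_le_one _⟩
  have hsq : ∀ j, Real.sqrt (1 - (v j)^2) = Real.sin (θ j) := by
    intro j
    have h1 : 1 - (v j)^2 = Real.sin (θ j)^2 := by
      have := Real.sin_sq_add_cos_sq (θ j); simp only [hvdef]; nlinarith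
    rw [h1, Real.sqrt_sq (hsin j).le]
  have hvlt : ∀ j, v j < 1 := by
    intro j
    rcases lt_or_eq_of_le (Real.cos_le_one (θ j)) with h' | h'
    · exact h'
    · exfalso
      have h2 := Real.sin_sq_add_cos_sq (θ j)
      rw [h'] at h2
      nlinarith [hsin j]
  have hNθ : ∀ j, (N:ℝ) * θ j = ((j:ℕ):ℝ) * π + π/2 := by
    intro j
    simp only [hθdef]
    field_simp
  have hcosN : ∀ j, Real.cos ((N:ℝ) * θ j) = 0 := by
    intro j
    rw [hNθ, Real.cos_add]
    simp [Real.sin_nat_mul_pi]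
  have hsinN : ∀ j, |Real.sin ((N:ℝ) * θ j)| = 1 := by
    intro j
    rw [hNθ, Real.sin_add]
    simp only [Real.cos_pi_div_two, Real.sin_pi_div_two, mul_zero, zero_add, mul_one]
    have h2 := Real.sin_sq_add_cos_sq (((j:ℕ):ℝ)*π)
    rw [Real.sin_nat_mul_pi] at h2
    have h3 : (Real.cos (((j:ℕ):ℝ)*π) - 1) * (Real.cos (((j:ℕ):ℝ)*π) + 1) = 0 := by
      linear_combination h2
    rcases mul_eq_zero.mp h3 with h' | h'
    · rw [show Real.cos (((j:ℕ):ℝ)*π) = 1 by linarith]; norm_num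
    · rw [show Real.cos (((j:ℕ):ℝ)*π) = -1 by linarith]; norm_num
  -- injectivity of nodes
  have hinj : Set.InjOn v ↑(Finset.univ : Finset (Fin N)) := by
    intro i _ j _ hij
    have hθij : θ i = θ j := by
      apply Real.injOn_cos ⟨(hθmem i).1.le, (hθmem i).2.le⟩ ⟨(hθmem j).1.le, (hθmem j).2.le⟩
      exact hij
    simp only [hθdef] at hθij
    field_simp at hθij
    exact Fin.ext (by exact_mod_cast (by linarith : ((i:ℕ):ℝ) = ((j:ℕ):ℝ)))
  have hvinj : Function.Injective v := fun a b hab =>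
    hinj (Finset.mem_coe.mpr (Finset.mem_univ a)) (Finset.mem_coe.mpr (Finset.mem_univ b)) hab
  -- Chebyshev polynomials
  set T : Polynomial ℝ := Polynomial.Chebyshev.T ℝ (N:ℤ) with hTdef
  set U : Polynomial ℝ := Polynomial.Chebyshev.U ℝ ((N:ℤ)-1) with hUdef
  have hTv : ∀ j, T.eval (v j) = 0 := by
    intro j
    simp only [hvdef, hTdef]
    rw [Polynomial.Chebyshev.T_real_cos]
    rw [show (((N:ℤ)):ℝ) = (N:ℝ) by push_cast; ring]
    exact hcosN j
  have hT1 : T.eval 1 = 1 := by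
    have := Polynomial.Chebyshev.T_real_cos 0 (N:ℤ)
    simp [hTdef]
  have hU1 : U.eval 1 = (N:ℝ) := by
    have hc : ((N:ℤ)-1) = ((d:ℕ):ℤ) := by simp [hNdef]
    rw [hUdef, hc, U_eval_one' d]
    simp [hNdef]
  have hUv : ∀ j, |U.eval (v j)| * Real.sin (θ j) = 1 := by
    intro j
    have hthis := Polynomial.Chebyshev.U_real_cos (θ j) ((N:ℤ)-1)
    have hcast : ((((N:ℤ)-1) : ℤ) : ℝ) + 1 = (N:ℝ) := by push_cast; ring
    rw [hcast] at hthis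
    simp only [hvdef, hUdef]
    rw [← abs_of_pos (hsin j), ← abs_mul, hthis, hsinN j]
  -- nodal polynomial divides T
  set W : Polynomial ℝ := Lagrange.nodal Finset.univ v with hWdef
  have hWdvd : W ∣ T := by
    rw [hWdef, Lagrange.nodal_eq]
    apply Finset.prod_dvd_of_coprime
    · exact (Polynomial.pairwise_coprime_X_sub_C hvinj).set_pairwise _
    · intro i _
      exact Polynomial.dvd_iff_isRoot.mpr (hTv i)
  obtain ⟨c, hc⟩ := hWdvd
  have hT0 : T ≠ 0 := by
    intro h0
    rw [h0] at hT1
    simp at hT1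
  have hWne : W ≠ 0 := Lagrange.nodal_ne_zero
  have hc0 : c ≠ 0 := by
    intro h0
    rw [h0, mul_zero] at hc
    exact hT0 hc
  have hdegW : W.natDegree = N := by
    rw [hWdef, Lagrange.natDegree_nodal, Finset.card_univ, Fintype.card_fin]
  have hdegT : T.natDegree ≤ N := natDegree_T_le' N
  have hcdeg : c.natDegree = 0 := by
    have h1 : T.natDegree = W.natDegree + c.natDegree := by
      rw [hc, Polynomial.natDegree_mul hWne hc0]
    omega
  set γ : ℝ := c.coeff 0 with hγdef
  have hcC : c = C γ := Polynomial.eq_C_of_natDegree_eq_zero hcdeg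
  have hc' : T = W * C γ := by rw [hc, hcC]
  -- evaluations
  have hW1γ : W.eval 1 * γ = 1 := by
    have := congrArg (Polynomial.eval 1) hc'
    simpa [hT1] using this.symm
  have hW1pos : 0 < W.eval 1 := by
    rw [hWdef, Lagrange.eval_nodal]
    apply Finset.prod_pos
    intro i _
    linarith [hvlt i]
  have hγpos : 0 < γ := by nlinarith
  -- derivative facts
  have hdT : ∀ x : ℝ, (derivative T).eval x = (N:ℝ) * U.eval x := by
    intro x
    rw [hTdef, Polynomial.Chebyshev.T_derivative_eq_U]
    simp [hUdef]
  have hdTW : ∀ x : ℝ, (derivative T).eval x = (derivative W).eval x * γ := by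
    intro x
    rw [hc', derivative_mul, derivative_C, mul_zero, add_zero]
    simp
  have hdW1 : (derivative W).eval 1 * γ = (N:ℝ) * (N:ℝ) := by
    rw [← hdTW, hdT, hU1]
  have hdWv : ∀ j, |(derivative W).eval (v j)| * (γ * Real.sin (θ j)) = (N:ℝ) := by
    intro j
    have h1 : (derivative W).eval (v j) * γ = (N:ℝ) * U.eval (v j) := by
      rw [← hdTW, hdT]
    have h2 : |(derivative W).eval (v j)| * γ = (N:ℝ) * |U.eval (v j)| := by
      rw [← abs_of_pos hγpos, ← abs_mul, h1, abs_mul, abs_of_pos hNpos]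
    calc |(derivative W).eval (v j)| * (γ * Real.sin (θ j))
        = (|(derivative W).eval (v j)| * γ) * Real.sin (θ j) := by ring
      _ = (N:ℝ) * (|U.eval (v j)| * Real.sin (θ j)) := by rw [h2]; ring
      _ = (N:ℝ) := by rw [hUv j]; ring
  -- nodal weights
  have hdWvne : ∀ j, (derivative W).eval (v j) ≠ 0 := by
    intro j h0
    have h1 := hdWv j
    rw [h0, abs_zero, zero_mul] at h1
    exact hNpos.ne h1
  have hw : ∀ j, |Lagrange.nodalWeight Finset.univ v j| = γ * Real.sin (θ j) / (N:ℝ) := by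
    intro j
    rw [Lagrange.nodalWeight_eq_eval_derivative_nodal (Finset.mem_univ j), abs_inv, ← hWdef]
    rw [eq_div_iff hNpos.ne']
    have h2 : |(derivative W).eval (v j)| ≠ 0 := abs_ne_zero.mpr (hdWvne j)
    field_simp
    linarith [hdWv j]
  -- sum of reciprocals
  have hsumW : (derivative W).eval 1 = W.eval 1 * ∑ j : Fin N, (1 - v j)⁻¹ := by
    rw [hWdef, Lagrange.derivative_nodal, Polynomial.eval_finset_sum, Finset.mul_sum]
    refine Finset.sum_congr rfl fun j _ => ?_
    have h1j : (0:ℝ) < 1 - v j := by linarith [hvlt j]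
    have hpe : (Lagrange.nodal (Finset.univ.erase j) v).eval 1 * (1 - v j)
        = (Lagrange.nodal Finset.univ v).eval 1 := by
      rw [Lagrange.eval_nodal, Lagrange.eval_nodal]
      exact Finset.prod_erase_mul _ _ (Finset.mem_univ j)
    rw [← hWdef] at hpe ⊢
    field_simp
    linarith [hpe]
  -- interpolation
  have hdegP : P.degree < ((Finset.univ : Finset (Fin N)).card : WithBot ℕ) := by
    rw [Finset.card_univ, Fintype.card_fin]
    refine lt_of_le_of_lt Polynomial.degree_le_natDegree ?_
    exact_mod_cast Nat.lt_succ_of_le hd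
  have hne1 : ∀ i ∈ (Finset.univ : Finset (Fin N)), (1:ℝ) ≠ v i := fun i _ => (hvlt i).ne'
  have hP1 : P.eval 1 = W.eval 1
      * ∑ j : Fin N, Lagrange.nodalWeight Finset.univ v j * (1 - v j)⁻¹ * P.eval (v j) := by
    conv_lhs => rw [Lagrange.eq_interpolate hinj hdegP]
    rw [Lagrange.eval_interpolate_not_at_node _ hne1, ← hWdef]
  have hPv : ∀ j, |P.eval (v j)| * Real.sin (θ j) ≤ M := by
    intro j
    have h1 := h (v j) (hvle j)
    rwa [hsq j] at h1
  -- term bound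
  have hterm : ∀ j, |Lagrange.nodalWeight Finset.univ v j * (1 - v j)⁻¹ * P.eval (v j)|
      ≤ (γ * M / N) * (1 - v j)⁻¹ := by
    intro j
    have h1j : (0:ℝ) < 1 - v j := by linarith [hvlt j]
    rw [abs_mul, abs_mul, hw j, abs_inv, abs_of_pos h1j]
    have h2 : |P.eval (v j)| ≤ M / Real.sin (θ j) := by
      rw [le_div_iff₀ (hsin j)]
      exact hPv j
    calc γ * Real.sin (θ j) / N * (1 - v j)⁻¹ * |P.eval (v j)|
        ≤ γ * Real.sin (θ j) / N * (1 - v j)⁻¹ * (M / Real.sin (θ j)) := by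
          refine mul_le_mul_of_nonneg_left h2 ?_
          have := hsin j
          have := hγpos
          have := inv_pos.mpr h1j
          positivity
      _ = (γ * M / N) * (1 - v j)⁻¹ := by
          have hgen : ∀ s : ℝ, s ≠ 0 → γ * s / N * (1 - v j)⁻¹ * (M / s)
              = γ * M / N * (1 - v j)⁻¹ := by
            intro s hs
            field_simp
          exact hgen _ (hsin j).ne'
  rw [hP1, abs_mul, abs_of_pos hW1pos]
  have habs : |∑ j : Fin N, Lagrange.nodalWeight Finset.univ v j * (1 - v j)⁻¹ * P.eval (v j)|
      ≤ ∑ j : Fin N, (γ * M / N) * (1 - v j)⁻¹ :=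
    (Finset.abs_sum_le_sum_abs _ _).trans (Finset.sum_le_sum fun j _ => hterm j)
  have hfin : W.eval 1 * ∑ j : Fin N, (γ * M / N) * (1 - v j)⁻¹ = (N:ℝ) * M := by
    rw [← Finset.mul_sum]
    calc W.eval 1 * ((γ * M / N) * ∑ j : Fin N, (1 - v j)⁻¹)
        = (γ * M / N) * (W.eval 1 * ∑ j : Fin N, (1 - v j)⁻¹) := by ring
      _ = (γ * M / N) * (derivative W).eval 1 := by rw [← hsumW]
      _ = (M / N) * ((derivative W).eval 1 * γ) := by ring
      _ = (M / N) * ((N:ℝ) * N) := by rw [hdW1]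
      _ = (N:ℝ) * M := by
          field_simp
  refine le_trans (mul_le_mul_of_nonneg_left habs hW1pos.le) ?_
  rw [hfin]
  apply le_of_eq
  rw [hNdef]
  push_cast
  ring

lemma sum_range_two_mul' (m : ℕ) (f : ℕ → ℝ) :
    ∑ i ∈ Finset.range (2*m), f i = ∑ k ∈ Finset.range m, (f (2*k) + f (2*k+1)) := by
  induction m with
  | zero => simp
  | succ m ih =>
    rw [Finset.sum_range_succ, ← ih, show 2*(m+1) = (2*m+1)+1 by ring,
      Finset.sum_range_succ, Finset.sum_range_succ]
    ring

theorem stmt12 (n : ℕ) (p : Polynomial ℝ) (hdeg : p.natDegree ≤ n)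
    (x₀ : ℝ) (hx₀ : x₀ ∈ Set.Ioo (-1 : ℝ) 1) :
    |p.derivative.eval x₀| ≤
      ((n : ℝ) + 1) / (1 - |x₀|) * sSup ((fun x => |p.eval x|) '' Set.Icc (-1 : ℝ) 1) := by
  obtain ⟨hx1, hx2⟩ := hx₀
  set δ : ℝ := 1 - |x₀| with hδdef
  have hδpos : 0 < δ := by
    have : |x₀| < 1 := abs_lt.mpr ⟨hx1, hx2⟩
    simp only [hδdef]
    linarith
  set M : ℝ := sSup ((fun x => |p.eval x|) '' Set.Icc (-1:ℝ) 1) with hMdef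
  have hbdd : BddAbove ((fun x => |p.eval x|) '' Set.Icc (-1:ℝ) 1) := by
    apply IsCompact.bddAbove
    apply IsCompact.image isCompact_Icc
    exact (Polynomial.continuous p).abs
  have hMle : ∀ x ∈ Set.Icc (-1:ℝ) 1, |p.eval x| ≤ M := fun x hx => le_csSup hbdd ⟨x, hx, rfl⟩
  have hM0 : 0 ≤ M := le_trans (abs_nonneg _) (hMle 0 (by norm_num))
  set q : Polynomial ℝ := p.comp (C x₀ + C δ * X) with hqdef
  have hqe : ∀ t : ℝ, q.eval t = p.eval (x₀ + δ * t) := by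
    intro t
    rw [hqdef, Polynomial.eval_comp]
    simp
  have hqM : ∀ t ∈ Set.Icc (-1:ℝ) 1, |q.eval t| ≤ M := by
    intro t ht
    rw [hqe]
    apply hMle
    have h2 : |t| ≤ 1 := abs_le.mpr ⟨ht.1, ht.2⟩
    have h1 : |x₀ + δ*t| ≤ 1 := by
      calc |x₀ + δ*t| ≤ |x₀| + |δ*t| := abs_add_le _ _
        _ = |x₀| + δ*|t| := by rw [abs_mul, abs_of_pos hδpos]
        _ ≤ |x₀| + δ*1 := by nlinarith
        _ = 1 := by simp only [hδdef]; ring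
    exact ⟨(abs_le.mp h1).1, (abs_le.mp h1).2⟩
  have hqdeg : q.natDegree ≤ n := by
    refine le_trans Polynomial.natDegree_comp_le ?_
    have h1 : (C x₀ + C δ * X : Polynomial ℝ).natDegree ≤ 1 := by
      refine le_trans (Polynomial.natDegree_add_le _ _) ?_
      have h2 : (C δ * X : Polynomial ℝ).natDegree ≤ 1 :=
        le_trans Polynomial.natDegree_mul_le (by simp)
      simp only [Polynomial.natDegree_C, max_le_iff]
      exact ⟨Nat.zero_le _, h2⟩
    calc p.natDegree * (C x₀ + C δ * X : Polynomial ℝ).natDegree ≤ n * 1 :=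
        Nat.mul_le_mul hdeg h1
      _ = n := mul_one n
  have hqd0 : q.coeff 1 = δ * p.derivative.eval x₀ := by
    have h1 : q.derivative = derivative (C x₀ + C δ * X)
        * (derivative p).comp (C x₀ + C δ * X) := by
      rw [hqdef, Polynomial.derivative_comp]
    have h2 : q.derivative.eval 0 = δ * p.derivative.eval x₀ := by
      rw [h1]
      simp [Polynomial.eval_comp]
    rw [← Polynomial.coeff_zero_eq_eval_zero, Polynomial.coeff_derivative] at h2
    simpa using h2
  set s : Polynomial ℝ := ∑ k ∈ Finset.range (n+1), C (q.coeff (2*k+1)) * X^k with hsdef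
  have hse : ∀ u : ℝ, s.eval u = ∑ k ∈ Finset.range (n+1), q.coeff (2*k+1) * u^k := by
    intro u
    rw [hsdef, Polynomial.eval_finset_sum]
    simp
  have hs0 : s.eval 0 = q.coeff 1 := by
    rw [hse, Finset.sum_eq_single 0]
    · norm_num
    · intro k _ hk
      simp [zero_pow hk]
    · intro h0
      exact absurd (Finset.mem_range.mpr (Nat.succ_pos n)) h0
  have hkey : ∀ t : ℝ, 2 * (t * s.eval (t^2)) = q.eval t - q.eval (-t) := by
    intro t
    have hlt : q.natDegree < 2*(n+1) := lt_of_le_of_lt hqdeg (by omega)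
    have hq1 : q.eval t = ∑ i ∈ Finset.range (2*(n+1)), q.coeff i * t^i :=
      Polynomial.eval_eq_sum_range' hlt t
    have hq2 : q.eval (-t) = ∑ i ∈ Finset.range (2*(n+1)), q.coeff i * (-t)^i :=
      Polynomial.eval_eq_sum_range' hlt (-t)
    rw [hq1, hq2, ← Finset.sum_sub_distrib, sum_range_two_mul', hse, Finset.mul_sum,
      Finset.mul_sum]
    refine Finset.sum_congr rfl fun k _ => ?_
    have h1 : (-t)^(2*k) = t^(2*k) := (even_two_mul k).neg_pow t
    have h2 : (-t)^(2*k+1) = -(t^(2*k+1)) := Odd.neg_pow (⟨k, by ring⟩ : Odd (2*k+1)) t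
    have h3 : (t^2)^k = t^(2*k) := by rw [← pow_mul, mul_comm]
    rw [h1, h2, h3, pow_succ]
    ring
  set P : Polynomial ℝ := s.comp (1 - X^2) with hPdef
  have hPe : ∀ w : ℝ, P.eval w = s.eval (1 - w^2) := by
    intro w
    rw [hPdef, Polynomial.eval_comp]
    simp
  have hscoeff : ∀ k, s.coeff k ≠ 0 → q.coeff (2*k+1) ≠ 0 := by
    intro k hk
    rw [hsdef, Polynomial.finset_sum_coeff] at hk
    simp only [Polynomial.coeff_C_mul, Polynomial.coeff_X_pow, mul_ite, mul_one, mul_zero] at hk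
    intro h0
    apply hk
    apply Finset.sum_eq_zero
    intro j _
    split
    · rename_i hkj
      rw [hkj] at h0
      exact h0
    · rfl
  have hPdeg : P.natDegree ≤ n := by
    by_cases h0 : s = 0
    · rw [hPdef, h0, Polynomial.zero_comp]
      simp
    · refine le_trans Polynomial.natDegree_comp_le ?_
      have h1 : (1 - X^2 : Polynomial ℝ).natDegree ≤ 2 := by
        refine le_trans (Polynomial.natDegree_sub_le _ _) ?_
        simp
      have h2 : q.coeff (2*s.natDegree+1) ≠ 0 :=
        hscoeff _ (by rw [← Polynomial.leadingCoeff]; exact Polynomial.leadingCoeff_ne_zero.mpr h0)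
      have h3 : 2*s.natDegree+1 ≤ q.natDegree := Polynomial.le_natDegree_of_ne_zero h2
      calc s.natDegree * (1 - X^2 : Polynomial ℝ).natDegree ≤ s.natDegree * 2 :=
          Nat.mul_le_mul_left _ h1
        _ ≤ n := by omega
  have hSchur : |P.eval 1| ≤ ((n:ℝ)+1) * M := by
    apply schur_endpoint n M P hPdeg
    intro w hw
    have hw2 : 0 ≤ 1 - w^2 := by nlinarith [hw.1, hw.2]
    set t : ℝ := Real.sqrt (1 - w^2) with htdef
    have ht0 : 0 ≤ t := Real.sqrt_nonneg _
    have ht1 : t ≤ 1 := Real.sqrt_le_one.mpr (by nlinarith [hw.1, hw.2])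
    have ht2 : t^2 = 1 - w^2 := Real.sq_sqrt hw2
    rw [hPe]
    calc |s.eval (1 - w^2)| * t = |s.eval (t^2) * t| := by
          rw [ht2, abs_mul, abs_of_nonneg ht0]
      _ = |(q.eval t - q.eval (-t))/2| := by
          rw [show s.eval (t^2) * t = (q.eval t - q.eval (-t))/2 by linarith [hkey t]]
      _ ≤ M := by
          have h1 := hqM t ⟨by linarith, ht1⟩
          have h2 := hqM (-t) ⟨by linarith, by linarith⟩
          have h3 : |q.eval t - q.eval (-t)| ≤ |q.eval t| + |q.eval (-t)| := by
            calc |q.eval t - q.eval (-t)| = |q.eval t + (-(q.eval (-t)))| := by ring_nf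
              _ ≤ |q.eval t| + |(-(q.eval (-t)))| := abs_add_le _ _
              _ = |q.eval t| + |q.eval (-t)| := by rw [abs_neg]
          rw [abs_div]
          rw [show |(2:ℝ)| = 2 by norm_num]
          linarith
  have h1 : P.eval 1 = q.coeff 1 := by
    rw [hPe]
    norm_num [hs0]
  rw [h1, hqd0, abs_mul, abs_of_pos hδpos] at hSchur
  rw [div_mul_eq_mul_div, le_div_iff₀ hδpos]
  linarith [hSchur]
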